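/- Let A be an n×n real matrix whose characteristic polynomial is λⁿ + a₁λ^{n−1} + ⋯ + aₙ, and let C, Ψ, Φ be as defined. Then ΨΦ A = C ΨΦ. In particular, if Φ is invertible then Q = ΨΦ conjugates A to the companion matrix C: Q A Q⁻¹ = C. -/

import Mathlib

open Matrix Polynomial

/-- The `n×n` companion matrix with first column `(−a₁,…,−aₙ)ᵀ` and
superdiagonal ones (`a i` encodes `a_{i+1}`). -/
def compC {n : ℕ} (a : Fin (n + 1) → ℝ) : Matrix (Fin (n + 1)) (Fin (n + 1)) ℝ :=
  Matrix.of fun i j =>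
    if (j : ℕ) = 0 then -a i else if (j : ℕ) = (i : ℕ) + 1 then 1 else 0

/-- The lower-triangular matrix `Ψ` with unit diagonal and `Ψ_{ij} = a_{i−j}`
for `i > j`. -/
def psiM {n : ℕ} (a : Fin (n + 1) → ℝ) : Matrix (Fin (n + 1)) (Fin (n + 1)) ℝ :=
  Matrix.of fun i j =>
    if (i : ℕ) = (j : ℕ) then 1
    else if (j : ℕ) < (i : ℕ) then
      a ⟨(i : ℕ) - (j : ℕ) - 1,
        lt_of_le_of_lt (le_trans (Nat.sub_le _ _) (Nat.sub_le _ _)) i.isLt⟩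
    else 0

/-- The observability matrix `Φ` whose `i`-th row is `e₁ᵀ A^{i−1}`. -/
noncomputable def phiM {n : ℕ} (A : Matrix (Fin (n + 1)) (Fin (n + 1)) ℝ) :
    Matrix (Fin (n + 1)) (Fin (n + 1)) ℝ :=
  Matrix.of fun i j => (A ^ (i : ℕ)) 0 j

/-- The nilpotent shift matrix `J` with superdiagonal ones. -/
def shiftJ (n : ℕ) : Matrix (Fin (n + 1)) (Fin (n + 1)) ℝ :=
  Matrix.of fun i j => if (j : ℕ) = (i : ℕ) + 1 then 1 else 0

/-- `ΨΦ A = C ΨΦ`; in particular, if `Φ` is invertible then `Q = ΨΦ`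
conjugates `A` to the companion matrix `C`. -/
theorem psiPhi_conjugates (n : ℕ) (a : Fin (n + 1) → ℝ)
    (A : Matrix (Fin (n + 1)) (Fin (n + 1)) ℝ)
    (hchar : A.charpoly
      = X ^ (n + 1) + ∑ i : Fin (n + 1), C (a i) * X ^ (n - (i : ℕ))) :
    psiM a * phiM A * A = compC a * (psiM a * phiM A) ∧
      (IsUnit (phiM A).det →
        (psiM a * phiM A) * A * (psiM a * phiM A)⁻¹ = compC a) := by
  classical
  set b : ℕ → ℝ := fun m => if h : m < n + 1 then a ⟨m, h⟩ else 0 with hb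
  set N : ℕ → Matrix (Fin (n+1)) (Fin (n+1)) ℝ :=
    fun m => A ^ m + ∑ k ∈ Finset.range m, b (m - k - 1) • A ^ k with hNdef
  have hba : ∀ (i : Fin (n+1)), b (i : ℕ) = a i := by
    intro i; simp [hb, i.isLt]; intro h; exact absurd h (by have := i.isLt; omega)
  have hN0 : N 0 = 1 := by simp [hNdef]
  have hrec : ∀ m, N (m + 1) = N m * A + b m • 1 := by
    intro m
    simp only [hNdef]
    rw [add_mul, Finset.sum_mul]
    have h2 : ∀ k : ℕ, m + 1 - k - 1 = m - k := fun k => by omega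
    simp only [h2]
    rw [Finset.sum_range_succ' (fun k => b (m - k) • A ^ k) m]
    have h3 : ∀ k : ℕ, m - (k + 1) = m - k - 1 := fun k => by omega
    simp only [h3, smul_mul_assoc, ← pow_succ, pow_zero]
    abel
  have hCH : N (n + 1) = 0 := by
    have h0 := Matrix.aeval_self_charpoly A
    rw [hchar] at h0
    simp only [map_add, map_sum, _root_.map_mul, map_pow, aeval_X, aeval_C] at h0
    have h1 : ∀ i : Fin (n+1),
        (algebraMap ℝ (Matrix (Fin (n+1)) (Fin (n+1)) ℝ)) (a i) * A ^ (n - (i:ℕ))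
          = b (i:ℕ) • A ^ (n - (i:ℕ)) := by
      intro i; rw [hba, Algebra.smul_def]
    rw [Finset.sum_congr rfl (fun i _ => h1 i)] at h0
    have h2 : ∑ i : Fin (n+1), b (i:ℕ) • A ^ (n - (i:ℕ))
        = ∑ k ∈ Finset.range (n+1), b (n + 1 - k - 1) • A ^ k := by
      rw [Fin.sum_univ_eq_sum_range (fun i => b i • A ^ (n - i)) (n+1)]
      rw [← Finset.sum_range_reflect (fun k => b (n + 1 - k - 1) • A ^ k) (n+1)]
      apply Finset.sum_congr rfl
      intro k hk
      simp only [Finset.mem_range] at hk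
      have e1 : n + 1 - 1 - k = n - k := by omega
      have e2 : n + 1 - (n - k) - 1 = k := by omega
      have e3 : n - (n - k) = k := by omega
      rw [e1, e2]
    rw [h2] at h0
    simp only [hNdef]
    exact h0
  have hQ : ∀ (i j : Fin (n+1)), (psiM a * phiM A) i j = N (i : ℕ) 0 j := by
    intro i j
    have hi := i.isLt
    rw [Matrix.mul_apply]
    set F : ℕ → ℝ := fun k =>
      (if (i:ℕ) = k then 1 else if k < (i:ℕ) then b ((i:ℕ) - k - 1) else 0)
        * (A ^ k) 0 j with hF
    have h1 : ∀ k : Fin (n+1), psiM a i k * phiM A k j = F (k:ℕ) := by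
      intro k
      have hik : (i:ℕ) - (k:ℕ) - 1 < n + 1 := by omega
      simp only [psiM, phiM, Matrix.of_apply, hF, hb]
      congr 1
      split_ifs <;> rfl
    rw [Finset.sum_congr rfl (fun k _ => h1 k),
      Fin.sum_univ_eq_sum_range F (n+1)]
    rw [← Finset.sum_subset (Finset.range_subset_range.2 (show (i:ℕ)+1 ≤ n+1 by omega))
      (by
        intro k hk hk'
        simp only [Finset.mem_range] at hk hk'
        have h2 : ¬ ((i:ℕ) = k) := by omega
        have h3 : ¬ (k < (i:ℕ)) := by omega
        simp [hF, h2, h3])]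
    rw [Finset.sum_range_succ]
    have h4 : ∀ k ∈ Finset.range (i:ℕ), F k = b ((i:ℕ) - k - 1) * (A ^ k) 0 j := by
      intro k hk
      simp only [Finset.mem_range] at hk
      simp [hF, Nat.ne_of_gt hk, hk]
    rw [Finset.sum_congr rfl h4]
    simp only [hNdef, Matrix.add_apply, Matrix.sum_apply, Matrix.smul_apply,
      smul_eq_mul, hF, eq_self_iff_true, if_true, one_mul]
    ring
  have hCQ : ∀ (i j : Fin (n+1)), (compC a * (psiM a * phiM A)) i j
      = -(a i) * N 0 0 j + N ((i:ℕ) + 1) 0 j := by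
    intro i j
    rw [Matrix.mul_apply]
    have hsplit : ∀ l : Fin (n+1), compC a i l * (psiM a * phiM A) l j
        = (if l = 0 then -(a i) * (psiM a * phiM A) l j else 0)
          + (if (l:ℕ) = (i:ℕ) + 1 then (psiM a * phiM A) l j else 0) := by
      intro l
      simp only [compC, Matrix.of_apply]
      rcases eq_or_ne l 0 with h | h
      · subst h
        simp [show ¬((0:ℕ) = (i:ℕ)+1) by omega]
      · have h0 : ¬((l:ℕ) = 0) := by
          exact fun hv => h (Fin.ext (by simp [hv]))
        simp only [h0, if_false, if_neg h]
        split_ifs <;> ring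
    rw [Finset.sum_congr rfl (fun l _ => hsplit l), Finset.sum_add_distrib]
    congr 1
    · rw [Finset.sum_ite_eq' Finset.univ 0
        (fun l => -(a i) * (psiM a * phiM A) l j)]
      simp [hQ]
    · by_cases h : (i:ℕ) + 1 < n + 1
      · have hs := Finset.sum_eq_single_of_mem (s := (Finset.univ : Finset (Fin (n+1))))
          (f := fun l => if (l:ℕ) = (i:ℕ)+1 then (psiM a * phiM A) l j else 0)
          ⟨(i:ℕ)+1, h⟩ (Finset.mem_univ _)
          (fun l _ hl => by
            show (if (l:ℕ) = (i:ℕ)+1 then (psiM a * phiM A) l j else 0) = 0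
            rw [if_neg fun hv => hl (Fin.ext hv)])
        rw [hs]
        simpa using hQ ⟨(i:ℕ)+1, h⟩ j
      · have hzero : ∀ l : Fin (n+1),
            (if (l:ℕ) = (i:ℕ)+1 then (psiM a * phiM A) l j else 0) = 0 := by
          intro l
          rw [if_neg]
          have := l.isLt
          have := i.isLt
          omega
        simp only [hzero, Finset.sum_const_zero]
        rw [show (i:ℕ) + 1 = n + 1 by have := i.isLt; omega, hCH]
        simp
  have key : psiM a * phiM A * A = compC a * (psiM a * phiM A) := by
    ext i j
    rw [Matrix.mul_apply, hCQ]
    rw [Finset.sum_congr rfl (fun l _ => by rw [hQ i l]),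
      ← Matrix.mul_apply]
    have h5 : N (i:ℕ) * A = N ((i:ℕ)+1) - b (i:ℕ) • 1 := by
      rw [hrec (i:ℕ)]; abel
    rw [h5]
    simp only [Matrix.sub_apply, Matrix.smul_apply, smul_eq_mul, hba i, hN0]
    ring
  refine ⟨key, fun hdet => ?_⟩
  have htri : (psiM a).BlockTriangular (OrderDual.toDual) := by
    intro p q hpq
    have h1 : (p:ℕ) < (q:ℕ) := hpq
    simp only [psiM, Matrix.of_apply]
    rw [if_neg (by omega), if_neg (by omega)]
  have hpsidet : (psiM a).det = 1 := by
    rw [Matrix.det_of_lowerTriangular (psiM a) htri]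
    simp [psiM]
  have hQdet : IsUnit (psiM a * phiM A).det := by
    rw [Matrix.det_mul, hpsidet, one_mul]; exact hdet
  rw [key, Matrix.mul_assoc, Matrix.mul_nonsing_inv _ hQdet, Matrix.mul_one]
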